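/- Suppose n+1 ∉ S. Then for every m̄ ∈ ℤ_{≥0}^{n+1}, the following identities hold in R: for every 1 ≤ j ≤ n, a_j^{−1}·(m_j+1)·σ_j^{−1}(P_{m̄+ε_j}(S,a)) = Θ_{m̄}(S,a) if j ∈ S, and a_j^{−1}·(m_j+1)·σ_j^{−1}(P_{m̄+ε_j}(S,a)) = (h_j − b)·Θ_{m̄}(S,a) if j ∉ S; moreover (m_{n+1}+1)·P_{m̄+ε_{n+1}}(S,a) = (h_{n+1} − b − 1)·Θ_{m̄}(S,a). -/

import Mathlib

open MvPolynomial

/-- The generators `h_1, …, h_n` of `R = ℂ[h_1,…,h_n]`, together with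
`h_{n+1} := -(h_1 + ⋯ + h_n)`.  Indices: `i : Fin (n+1)` with `(i : ℕ) < n`
corresponding to `h_1, …, h_n` and `i = Fin.last n` to `h_{n+1}`. -/
noncomputable def Hp (n : ℕ) (i : Fin (n + 1)) : MvPolynomial (Fin n) ℂ :=
  if h : (i : ℕ) < n then X ⟨i, h⟩ else -∑ j : Fin n, X j

/-- The automorphism `σ_i` of `R` determined by `σ_i(h_k) = h_k - δ_{k,i}` for `1 ≤ i ≤ n`,
and `σ_{n+1} = id`. -/
noncomputable def sigma (n : ℕ) (i : Fin (n + 1)) :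
    MvPolynomial (Fin n) ℂ ≃ₐ[ℂ] MvPolynomial (Fin n) ℂ :=
  if h : (i : ℕ) < n then
    AlgEquiv.ofAlgHom
      (aeval fun k => X k - if k = ⟨i, h⟩ then 1 else 0)
      (aeval fun k => X k + if k = ⟨i, h⟩ then 1 else 0)
      (by ext k : 1; by_cases hk : k = ⟨i, h⟩ <;> simp [hk])
      (by ext k : 1; by_cases hk : k = ⟨i, h⟩ <;> simp [hk])
  else AlgEquiv.refl

/-- The scalar `a^{m̄}/m̄!`. -/
noncomputable def coef (n : ℕ) (a : Fin (n + 1) → ℂ) (m : Fin (n + 1) → ℕ) : ℂ :=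
  (∏ j, a j ^ m j) / ((∏ j, (m j).factorial : ℕ) : ℂ)

/-- `P_{m̄}(S,a) = (a^{m̄}/m̄!) ∏_{s ∉ S} ∏_{k=1}^{m_s} (h_s - b - k)`. -/
noncomputable def Pm (n : ℕ) (b : ℂ) (S : Finset (Fin (n + 1))) (a : Fin (n + 1) → ℂ)
    (m : Fin (n + 1) → ℕ) : MvPolynomial (Fin n) ℂ :=
  coef n a m • ∏ s ∈ Sᶜ, ∏ k ∈ Finset.range (m s), (Hp n s - C (b + k + 1))

/-- `P'_{m̄}(S,a) = (a^{m̄}/m̄!) ∏_{s∉S, s≠n+1} ∏_{k=1}^{m_s}(h_s - b - k) ⋅ C ⋅`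
`∏_{t=1}^{m_{n+1}}(h_{n+1} + nb - t + 1)`, where
`C = ∏_{r=1}^{N-m_{n+1}}(h_{n+1} - b - 1 + r)` if `n+1 ∈ S` and `C = 1` otherwise. -/
noncomputable def P' (n : ℕ) (b : ℂ) (S : Finset (Fin (n + 1))) (a : Fin (n + 1) → ℂ)
    (N : ℕ) (m : Fin (n + 1) → ℕ) : MvPolynomial (Fin n) ℂ :=
  coef n a m •
    ((∏ s ∈ Sᶜ.erase (Fin.last n), ∏ k ∈ Finset.range (m s), (Hp n s - C (b + k + 1)))
      * (if Fin.last n ∈ S then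
            ∏ r ∈ Finset.range (N - m (Fin.last n)), (Hp n (Fin.last n) - C (b - r))
          else 1)
      * ∏ t ∈ Finset.range (m (Fin.last n)), (Hp n (Fin.last n) + C ((n : ℂ) * b - t)))

/-- `Δ_{m̄}(S,a) = (a^{m̄}/m̄!) ∏_{s∉S} ∏_{k=1}^{m_s}(h_s - b - k) ⋅`
`∏_{r=2}^{N-m_{n+1}}(h_{n+1} - b - 2 + r) ⋅ ∏_{t=1}^{m_{n+1}}(h_{n+1} + nb - t)`. -/
noncomputable def Δm (n : ℕ) (b : ℂ) (S : Finset (Fin (n + 1))) (a : Fin (n + 1) → ℂ)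
    (N : ℕ) (m : Fin (n + 1) → ℕ) : MvPolynomial (Fin n) ℂ :=
  coef n a m •
    ((∏ s ∈ Sᶜ, ∏ k ∈ Finset.range (m s), (Hp n s - C (b + k + 1)))
      * (∏ r ∈ Finset.range (N - m (Fin.last n) - 1), (Hp n (Fin.last n) - C (b - r)))
      * ∏ t ∈ Finset.range (m (Fin.last n)), (Hp n (Fin.last n) + C ((n : ℂ) * b - t - 1)))

/-- `Θ_{m̄}(S,a) = (a^{m̄}/m̄!) ∏_{s∉S, s≠n+1} ∏_{k=1}^{m_s}(h_s - b - k) ⋅`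
`∏_{k=1}^{m_{n+1}}(h_{n+1} - b - k - 1)`. -/
noncomputable def Θm (n : ℕ) (b : ℂ) (S : Finset (Fin (n + 1))) (a : Fin (n + 1) → ℂ)
    (m : Fin (n + 1) → ℕ) : MvPolynomial (Fin n) ℂ :=
  coef n a m •
    ((∏ s ∈ Sᶜ.erase (Fin.last n), ∏ k ∈ Finset.range (m s), (Hp n s - C (b + k + 1)))
      * ∏ k ∈ Finset.range (m (Fin.last n)), (Hp n (Fin.last n) - C (b + k + 2)))

/-- `Υ_{m̄}(S,a) = (a^{m̄}/m̄!) ∏_{s∉S, s≠n+1} ∏_{k=1}^{m_s}(h_s - b - k) ⋅`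
`∏_{t=1}^{m_{n+1}}(h_{n+1} + nb - t)`. -/
noncomputable def Υm (n : ℕ) (b : ℂ) (S : Finset (Fin (n + 1))) (a : Fin (n + 1) → ℂ)
    (m : Fin (n + 1) → ℕ) : MvPolynomial (Fin n) ℂ :=
  coef n a m •
    ((∏ s ∈ Sᶜ.erase (Fin.last n), ∏ k ∈ Finset.range (m s), (Hp n s - C (b + k + 1)))
      * ∏ t ∈ Finset.range (m (Fin.last n)), (Hp n (Fin.last n) + C ((n : ℂ) * b - t - 1)))

/-- `h̄_i = h_i - δ_{i,n+1}`. -/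
noncomputable def Hbar (n : ℕ) (i : Fin (n + 1)) : MvPolynomial (Fin n) ℂ :=
  Hp n i - if i = Fin.last n then 1 else 0

/-- The `(n+1) × (n+1)` matrix `A(λ,b,S,N)` with entries in `R`:
`A_{ii} = h̄_i - λ - N + 2` and, for `i ≠ j`,
`A_{ij} = (δ_{i∈S} + δ_{i∉S}(h̄_i - b)) (δ_{j∈S}(h̄_j - b) + δ_{j∉S})`. -/
noncomputable def Amat (n : ℕ) (lam b : ℂ) (S : Finset (Fin (n + 1))) (N : ℕ) :
    Matrix (Fin (n + 1)) (Fin (n + 1)) (MvPolynomial (Fin n) ℂ) :=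
  fun i j =>
    if i = j then Hbar n i - C (lam + N - 2)
    else (if i ∈ S then 1 else Hbar n i - C b) * (if j ∈ S then Hbar n j - C b else 1)


lemma sigma_symm_Hp (n : ℕ) (j : Fin (n+1)) (hj : (j : ℕ) < n) (s : Fin (n+1)) :
    (sigma n j).symm (Hp n s)
      = Hp n s + if s = j then 1 else if s = Fin.last n then -1 else 0 := by
  have hcoe : ((sigma n j).symm : MvPolynomial (Fin n) ℂ → _)
      = aeval fun k => X k + if k = ⟨j, hj⟩ then 1 else 0 := by
    simp only [sigma, dif_pos hj]
    rfl
  rw [hcoe]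
  unfold Hp
  by_cases hs : (s : ℕ) < n
  · rw [dif_pos hs, aeval_X]
    have h1 : (⟨(s:ℕ), hs⟩ : Fin n) = ⟨(j:ℕ), hj⟩ ↔ s = j := by
      simp [Fin.ext_iff]
    have h2 : s ≠ Fin.last n := by
      intro h; rw [h] at hs; simp at hs
    by_cases h : s = j
    · simp [h1.mpr h, h]
    · rw [if_neg (fun hh => h (h1.mp hh)), if_neg h, if_neg h2, add_zero]
  · have hlast : s = Fin.last n := by
      ext
      simpa [Nat.lt_succ_iff] using Nat.le_antisymm (Nat.lt_succ_iff.mp s.isLt) (le_of_not_gt hs)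
    have hne : s ≠ j := by intro h; rw [h] at hs; exact hs hj
    rw [dif_neg hs, if_neg hne, if_pos hlast]
    simp [Finset.sum_add_distrib, Finset.sum_ite_eq']
    ring

lemma coef_succ (n : ℕ) (a : Fin (n+1) → ℂ) (m : Fin (n+1) → ℕ) (j : Fin (n+1)) :
    coef n a (fun l => m l + if l = j then 1 else 0)
      = (a j / ((m j : ℂ) + 1)) * coef n a m := by
  unfold coef
  have h1 : (∏ l, a l ^ (m l + if l = j then 1 else 0)) = a j * ∏ l, a l ^ m l := by
    simp only [pow_add, Finset.prod_mul_distrib]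
    rw [mul_comm]
    congr 1
    have : ∀ l : Fin (n+1), a l ^ (if l = j then 1 else 0) = if l = j then a l else 1 := by
      intro l; split <;> simp
    simp only [this, Finset.prod_ite_eq', Finset.mem_univ, if_pos]
  have h2 : (∏ l, (m l + if l = j then 1 else 0).factorial)
      = (m j + 1) * ∏ l, (m l).factorial := by
    have he : ∏ l ∈ Finset.univ.erase j, (m l + if l = j then 1 else 0).factorial
        = ∏ l ∈ Finset.univ.erase j, (m l).factorial :=
      Finset.prod_congr rfl fun l hl => by
        rw [if_neg (Finset.mem_erase.mp hl).1, add_zero]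
    rw [← Finset.mul_prod_erase _ _ (Finset.mem_univ j), he, if_pos rfl,
      Nat.factorial_succ, mul_assoc,
      Finset.mul_prod_erase _ (fun l => (m l).factorial) (Finset.mem_univ j)]
  rw [h1, h2]
  push_cast
  rw [mul_div_mul_comm]

/-- Lemma 7(2), first family of identities (`n+1 ∉ S`): for every `m̄`, for `1 ≤ j ≤ n`,
`a_j⁻¹ (m_j+1) σ_j⁻¹(P_{m̄+ε_j}(S,a)) = Θ_{m̄}(S,a)` if `j ∈ S`,
`= (h_j - b) Θ_{m̄}(S,a)` if `j ∉ S`; moreover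
`(m_{n+1}+1) P_{m̄+ε_{n+1}}(S,a) = (h_{n+1} - b - 1) Θ_{m̄}(S,a)`. -/
theorem statement14 (n : ℕ) (hn : 1 ≤ n) (b : ℂ) (S : Finset (Fin (n + 1)))
    (a : Fin (n + 1) → ℂ) (ha : ∀ j, a j ≠ 0) (halast : a (Fin.last n) = 1)
    (hS : Fin.last n ∉ S) (m : Fin (n + 1) → ℕ) :
    (∀ j : Fin (n + 1), (j : ℕ) < n →
      ((a j)⁻¹ * (m j + 1 : ℂ)) •
          (sigma n j).symm (Pm n b S a (fun l => m l + if l = j then 1 else 0))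
        = if j ∈ S then Θm n b S a m else (Hp n j - C b) * Θm n b S a m) ∧
    (m (Fin.last n) + 1 : ℂ) •
        Pm n b S a (fun l => m l + if l = Fin.last n then 1 else 0)
      = (Hp n (Fin.last n) - C b - 1) * Θm n b S a m := by
  have hLc : Fin.last n ∈ Sᶜ := Finset.mem_compl.mpr hS
  have hτC : ∀ (j : Fin (n+1)) (c : ℂ), (sigma n j).symm (C c) = C c := fun j c => by
    rw [← MvPolynomial.algebraMap_eq]; exact AlgEquiv.commutes _ c
  have hC2 : ∀ k : ℕ, (C (b + (k:ℂ) + 2) : MvPolynomial (Fin n) ℂ) = C (b + k + 1) + 1 := by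
    intro k
    rw [show (b + (k:ℂ) + 2) = (b + k + 1) + 1 by ring]
    rw [map_add, map_one]
  have hC1 : ∀ k : ℕ, (C (b + (k:ℂ) + 1) : MvPolynomial (Fin n) ℂ) = C (b + k) + 1 := by
    intro k
    rw [map_add, map_one]
  constructor
  · intro j hj
    have hjL : j ≠ Fin.last n := by
      intro h; rw [h] at hj; simp at hj
    have hLj : ¬ (Fin.last n = j) := fun h => hjL h.symm
    have hm'L : (m (Fin.last n) + if Fin.last n = j then 1 else 0) = m (Fin.last n) := by
      rw [if_neg hLj, add_zero]
    have hcoef := coef_succ n a m j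
    have hc : (a j)⁻¹ * ((m j : ℂ)+1) * ((a j / ((m j : ℂ)+1)) * coef n a m)
        = coef n a m := by
      have h1 : ((m j : ℂ) + 1) ≠ 0 := Nat.cast_add_one_ne_zero (m j)
      rw [div_eq_mul_inv,
        show (a j)⁻¹ * ((m j : ℂ)+1) * (a j * ((m j : ℂ)+1)⁻¹ * coef n a m)
          = ((a j)⁻¹ * a j) * ((((m j : ℂ))+1) * ((m j : ℂ)+1)⁻¹) * coef n a m by ring,
        inv_mul_cancel₀ (ha j), mul_inv_cancel₀ h1, one_mul, one_mul]
    by_cases hjS : j ∈ S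
    · rw [if_pos hjS]
      rw [Pm, map_smul, map_prod]
      simp only [map_prod, map_sub, hτC, sigma_symm_Hp n j hj]
      rw [← Finset.mul_prod_erase _ _ hLc]
      have hLfac : (∏ k ∈ Finset.range (m (Fin.last n) + if Fin.last n = j then 1 else 0),
            (Hp n (Fin.last n) + (if Fin.last n = j then 1 else if Fin.last n = Fin.last n then -1 else 0)
              - C (b + k + 1)))
          = ∏ k ∈ Finset.range (m (Fin.last n)), (Hp n (Fin.last n) - C (b + k + 2)) := by
        rw [hm'L]
        refine Finset.prod_congr rfl fun k _ => ?_
        rw [if_neg hLj, if_pos rfl, hC2 k]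
        ring
      have herase : (∏ s ∈ Sᶜ.erase (Fin.last n),
            ∏ k ∈ Finset.range (m s + if s = j then 1 else 0),
            (Hp n s + (if s = j then 1 else if s = Fin.last n then -1 else 0) - C (b + k + 1)))
          = ∏ s ∈ Sᶜ.erase (Fin.last n), ∏ k ∈ Finset.range (m s), (Hp n s - C (b + k + 1)) := by
        refine Finset.prod_congr rfl fun s hs => ?_
        obtain ⟨hsL, hsc⟩ := Finset.mem_erase.mp hs
        have hsj : s ≠ j := fun h => (Finset.mem_compl.mp hsc) (h ▸ hjS)
        rw [if_neg hsj, if_neg hsj, if_neg hsL, add_zero, add_zero]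
      rw [hLfac, herase, Θm, smul_smul, hcoef, hc, mul_comm]
    · rw [if_neg hjS]
      have hjc : j ∈ Sᶜ := Finset.mem_compl.mpr hjS
      have hjc' : j ∈ Sᶜ.erase (Fin.last n) := Finset.mem_erase.mpr ⟨hjL, hjc⟩
      rw [Pm, map_smul, map_prod]
      simp only [map_prod, map_sub, hτC, sigma_symm_Hp n j hj]
      rw [← Finset.mul_prod_erase _ _ hLc, ← Finset.mul_prod_erase _ _ hjc']
      have hLfac : (∏ k ∈ Finset.range (m (Fin.last n) + if Fin.last n = j then 1 else 0),
            (Hp n (Fin.last n) + (if Fin.last n = j then 1 else if Fin.last n = Fin.last n then -1 else 0)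
              - C (b + k + 1)))
          = ∏ k ∈ Finset.range (m (Fin.last n)), (Hp n (Fin.last n) - C (b + k + 2)) := by
        rw [hm'L]
        refine Finset.prod_congr rfl fun k _ => ?_
        rw [if_neg hLj, if_pos rfl, hC2 k]
        ring
      have hjfac : (∏ k ∈ Finset.range (m j + if j = j then 1 else 0),
            (Hp n j + (if j = j then 1 else if j = Fin.last n then -1 else 0) - C (b + k + 1)))
          = (Hp n j - C b) * ∏ k ∈ Finset.range (m j), (Hp n j - C (b + k + 1)) := by
        rw [if_pos rfl]
        have h1 : ∀ k : ℕ, Hp n j + (if (j:Fin (n+1)) = j then (1:MvPolynomial (Fin n) ℂ) else if j = Fin.last n then -1 else 0) - C (b + k + 1)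
            = Hp n j - C (b + k) := by
          intro k
          rw [if_pos rfl, hC1 k]
          ring
        calc (∏ k ∈ Finset.range (m j + 1),
              (Hp n j + (if (j:Fin (n+1)) = j then (1:MvPolynomial (Fin n) ℂ) else if j = Fin.last n then -1 else 0) - C (b + k + 1)))
            = ∏ k ∈ Finset.range (m j + 1), (Hp n j - C (b + k)) :=
              Finset.prod_congr rfl fun k _ => h1 k
          _ = (∏ k ∈ Finset.range (m j), (Hp n j - C (b + (k+1:ℕ)))) * (Hp n j - C (b + (0:ℕ))) :=
              Finset.prod_range_succ' _ _
          _ = (Hp n j - C b) * ∏ k ∈ Finset.range (m j), (Hp n j - C (b + k + 1)) := by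
              rw [mul_comm]
              congr 1
              · norm_num
              · exact Finset.prod_congr rfl fun k _ => by push_cast; ring_nf
      have herase : (∏ s ∈ (Sᶜ.erase (Fin.last n)).erase j,
            ∏ k ∈ Finset.range (m s + if s = j then 1 else 0),
            (Hp n s + (if s = j then 1 else if s = Fin.last n then -1 else 0) - C (b + k + 1)))
          = ∏ s ∈ (Sᶜ.erase (Fin.last n)).erase j,
            ∏ k ∈ Finset.range (m s), (Hp n s - C (b + k + 1)) := by
        refine Finset.prod_congr rfl fun s hs => ?_
        obtain ⟨hsj, hs2⟩ := Finset.mem_erase.mp hs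
        have hsL := (Finset.mem_erase.mp hs2).1
        rw [if_neg hsj, if_neg hsj, if_neg hsL, add_zero, add_zero]
      rw [hLfac, hjfac, herase, Θm, smul_smul, hcoef, hc,
        ← Finset.mul_prod_erase _ (fun s => ∏ k ∈ Finset.range (m s), (Hp n s - C (b + k + 1))) hjc',
        mul_smul_comm]
      refine congrArg (fun x => coef n a m • x) ?_
      ring
  · rw [Pm, ← Finset.mul_prod_erase _ _ hLc]
    have hm'L : (m (Fin.last n) + if (Fin.last n : Fin (n+1)) = Fin.last n then 1 else 0)
        = m (Fin.last n) + 1 := by rw [if_pos rfl]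
    have hLfac : (∏ k ∈ Finset.range (m (Fin.last n) + if (Fin.last n : Fin (n+1)) = Fin.last n then 1 else 0),
          (Hp n (Fin.last n) - C (b + k + 1)))
        = (Hp n (Fin.last n) - C b - 1) *
            ∏ k ∈ Finset.range (m (Fin.last n)), (Hp n (Fin.last n) - C (b + k + 2)) := by
      rw [hm'L, Finset.prod_range_succ']
      rw [mul_comm]
      congr 1
      · rw [show (b + ((0:ℕ):ℂ) + 1) = b + 1 by push_cast; ring,
          show (C (b + 1) : MvPolynomial (Fin n) ℂ) = C b + 1 by rw [map_add, map_one]]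
        ring
      · exact Finset.prod_congr rfl fun k _ => by
          rw [show (b + ((k+1:ℕ):ℂ) + 1) = b + k + 2 by push_cast; ring]
    have herase : (∏ s ∈ Sᶜ.erase (Fin.last n),
          ∏ k ∈ Finset.range (m s + if s = Fin.last n then 1 else 0),
          (Hp n s - C (b + k + 1)))
        = ∏ s ∈ Sᶜ.erase (Fin.last n), ∏ k ∈ Finset.range (m s), (Hp n s - C (b + k + 1)) := by
      refine Finset.prod_congr rfl fun s hs => ?_
      rw [if_neg (Finset.mem_erase.mp hs).1, add_zero]
    rw [hLfac, herase, Θm, coef_succ n a m (Fin.last n), halast, smul_smul]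
    have h1 : ((m (Fin.last n) : ℂ) + 1) ≠ 0 := Nat.cast_add_one_ne_zero (m (Fin.last n))
    rw [show ((m (Fin.last n) : ℂ) + 1) * ((1 / ((m (Fin.last n) : ℂ)+1)) * coef n a m)
        = coef n a m by field_simp]
    rw [mul_smul_comm]
    congr 1
    ring
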